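/- Let c ≥ 1 and k ≥ 1 be integers and let p ∈ (0,1) with q = 1 - p. Define the Degroot estimator D : ℕ → ℝ by D(0) = 0 and D(z) = 1 - ∏_{j=1}^{z} (j + c - 1 - 1/k)/(j + c - 1) for z ≥ 1. Then the family z ↦ D(z) · C(c+z-1, z) · (q^k)^c · (1-q^k)^z is summable over z ∈ ℕ and its sum equals p; i.e., D is an unbiased estimator of p under model (c). -/

import Mathlib

open Finset Filter

noncomputable def binA (α : ℝ) (z : ℕ) : ℝ := ∏ j ∈ Finset.range z, (α + j) / (j + 1)

lemma binA_nonneg {α : ℝ} (hα : 0 ≤ α) (z : ℕ) : 0 ≤ binA α z := by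
  apply Finset.prod_nonneg
  intro j _
  positivity

lemma binA_succ (α : ℝ) (z : ℕ) : binA α (z + 1) = binA α z * ((α + z) / (z + 1)) := by
  rw [binA, Finset.prod_range_succ]; rfl

lemma binA_rec (α : ℝ) (z : ℕ) : (z + 1 : ℝ) * binA α (z + 1) = (α + z) * binA α z := by
  rw [binA_succ]
  field_simp

lemma summable_binA {α : ℝ} (hα : 0 ≤ α) {r : ℝ} (hr0 : 0 ≤ r) (hr1 : r < 1) :
    Summable (fun z : ℕ => binA α z * r ^ z) := by
  set r' : ℝ := (1 + r) / 2 with hr'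
  have hrr' : r < r' := by rw [hr']; linarith
  have hr'1 : r' < 1 := by rw [hr']; linarith
  have hr'0 : 0 < r' := by rw [hr']; linarith
  apply summable_of_ratio_norm_eventually_le hr'1
  obtain ⟨N, hN⟩ := exists_nat_ge (r * α / (r' - r))
  filter_upwards [eventually_ge_atTop N] with z hz
  have hzN : (N : ℝ) ≤ z := by exact_mod_cast hz
  have key : r * (α + z) ≤ r' * (z + 1) := by
    have h1 : r * α ≤ (r' - r) * N := by
      rw [div_le_iff₀ (by linarith)] at hN
      nlinarith
    nlinarith
  have hb := binA_nonneg hα z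
  have hrz : (0:ℝ) ≤ r ^ z := by positivity
  have h2 : ((z:ℝ)+1) * (binA α (z+1) * r^(z+1)) ≤ ((z:ℝ)+1) * (r' * (binA α z * r^z)) := by
    have hrec := binA_rec α z
    have h3 : ((z:ℝ)+1) * (binA α (z+1) * r^(z+1)) = ((α + z) * binA α z) * (r^z * r) := by
      rw [pow_succ, ← hrec]; push_cast; ring
    rw [h3]
    nlinarith [mul_le_mul_of_nonneg_right key (mul_nonneg hb hrz)]
  have h1 : binA α (z+1) * r^(z+1) ≤ r' * (binA α z * r^z) :=
    le_of_mul_le_mul_left h2 (by positivity)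
  rw [Real.norm_eq_abs, Real.norm_eq_abs,
    abs_of_nonneg (mul_nonneg (binA_nonneg hα _) (by positivity : (0:ℝ) ≤ r ^ (z+1))),
    abs_of_nonneg (mul_nonneg (binA_nonneg hα _) hrz)]
  exact h1

lemma summable_binA_deriv {α : ℝ} (hα : 0 ≤ α) {b : ℝ} (hb0 : 0 < b) (hb1 : b < 1) :
    Summable (fun z : ℕ => binA α z * z * b ^ (z - 1)) := by
  set r' : ℝ := (1 + b) / 2 with hr'
  have hbr' : b < r' := by rw [hr']; linarith
  have hr'1 : r' < 1 := by rw [hr']; linarith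
  have hr'0 : 0 < r' := by rw [hr']; linarith
  apply summable_of_ratio_norm_eventually_le hr'1
  obtain ⟨N, hN⟩ := exists_nat_ge (b * α / (r' - b))
  filter_upwards [eventually_ge_atTop (max N 1)] with z hz
  have hz1 : 1 ≤ z := le_trans (le_max_right N 1) hz
  have hzN : (N : ℝ) ≤ z := by exact_mod_cast le_trans (le_max_left N 1) hz
  have key : b * (α + z) ≤ r' * z := by
    have h1 : b * α ≤ (r' - b) * N := by
      rw [div_le_iff₀ (by linarith)] at hN
      nlinarith
    nlinarith
  have hb' := binA_nonneg hα z
  have hrz : (0:ℝ) ≤ b ^ (z - 1) := by positivity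
  have hzr : (0:ℝ) < z := by exact_mod_cast hz1
  have hpow : b ^ (z + 1 - 1) = b ^ (z - 1) * b := by
    obtain ⟨m, rfl⟩ := Nat.exists_eq_add_of_le hz1
    rw [show 1 + m + 1 - 1 = (1 + m - 1) + 1 by omega, pow_succ]
  have h2 : ((z:ℝ)+1) * (binA α (z+1) * (z+1) * b^(z+1-1)) ≤
      ((z:ℝ)+1) * (r' * (binA α z * z * b^(z-1))) := by
    have hrec := binA_rec α z
    have h3 : ((z:ℝ)+1) * (binA α (z+1) * (z+1) * b^(z+1-1)) =
        ((α + z) * binA α z) * ((z+1) * (b^(z-1) * b)) := by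
      rw [hpow, ← hrec]; push_cast; ring
    rw [h3]
    have h4 : (α + z) * binA α z * (b^(z-1) * b) ≤ r' * z * (binA α z * b^(z-1)) := by
      nlinarith [mul_le_mul_of_nonneg_right key (mul_nonneg hb' hrz)]
    nlinarith [mul_le_mul_of_nonneg_left h4 (by positivity : (0:ℝ) ≤ (z:ℝ)+1)]
  have h1 : binA α (z+1) * (z+1) * b^(z+1-1) ≤ r' * (binA α z * z * b^(z-1)) :=
    le_of_mul_le_mul_left h2 (by positivity)
  have n1 : (0:ℝ) ≤ binA α (z+1) * (((z+1:ℕ)):ℝ) * b^(z+1-1) :=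
    mul_nonneg (mul_nonneg (binA_nonneg hα _) (Nat.cast_nonneg _)) (by positivity)
  have n2 : (0:ℝ) ≤ binA α z * (z:ℝ) * b^(z-1) :=
    mul_nonneg (mul_nonneg hb' (Nat.cast_nonneg _)) hrz
  rw [Real.norm_eq_abs, Real.norm_eq_abs, abs_of_nonneg n1, abs_of_nonneg n2]
  convert h1 using 3
  push_cast; ring

lemma binom_series {α : ℝ} (hα : 0 ≤ α) {y : ℝ} (hy0 : 0 ≤ y) (hy1 : y < 1) :
    HasSum (fun z : ℕ => binA α z * y ^ z) ((1 - y) ^ (-α)) := by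
  rcases eq_or_lt_of_le hy0 with rfl | hy0'
  · have h := hasSum_single (f := fun z : ℕ => binA α z * (0:ℝ) ^ z) 0
      (fun b hb => by simp [zero_pow hb])
    simpa [binA, Real.one_rpow] using h
  set b : ℝ := (1 + y) / 2 with hb
  have hyb : y < b := by rw [hb]; linarith
  have hb0 : 0 < b := by rw [hb]; linarith
  have hb1 : b < 1 := by rw [hb]; linarith
  set u : ℕ → ℝ := fun z => binA α z * z * b ^ (z - 1) with hu_def
  have hu : Summable u := summable_binA_deriv hα hb0 hb1
  set g : ℕ → ℝ → ℝ := fun z t => binA α z * t ^ z with hg_def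
  set g' : ℕ → ℝ → ℝ := fun z t => binA α z * (z * t ^ (z - 1)) with hg'_def
  have hg : ∀ (z : ℕ), ∀ t ∈ Set.Ioo (-b) b, HasDerivAt (g z) (g' z t) t := fun z t _ =>
    (hasDerivAt_pow z t).const_mul _
  have habs : ∀ t ∈ Set.Ioo (-b) b, |t| ≤ b := fun t ht => abs_le.mpr ⟨ht.1.le, ht.2.le⟩
  have hg' : ∀ (z : ℕ), ∀ t ∈ Set.Ioo (-b) b, ‖g' z t‖ ≤ u z := by
    intro z t ht
    have h1 : ‖g' z t‖ = binA α z * (z * |t| ^ (z - 1)) := by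
      rw [hg'_def, Real.norm_eq_abs, abs_mul, abs_mul, abs_pow,
        abs_of_nonneg (binA_nonneg hα z), Nat.abs_cast]
    rw [h1, hu_def]
    have h2 : |t| ^ (z - 1) ≤ b ^ (z - 1) := pow_le_pow_left₀ (abs_nonneg t) (habs t ht) _
    have := binA_nonneg hα z
    calc binA α z * (z * |t| ^ (z - 1)) ≤ binA α z * (z * b ^ (z - 1)) := by
          apply mul_le_mul_of_nonneg_left _ this
          exact mul_le_mul_of_nonneg_left h2 (Nat.cast_nonneg z)
      _ = binA α z * z * b ^ (z - 1) := by ring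
  have hg0 : Summable (fun z => g z 0) := by
    simpa [hg_def] using summable_binA hα le_rfl one_pos
  have h0mem : (0 : ℝ) ∈ Set.Ioo (-b) b := ⟨by linarith, hb0⟩
  set f : ℝ → ℝ := fun t => ∑' z, g z t with hf_def
  have hderiv : ∀ t ∈ Set.Ioo (-b) b, HasDerivAt f (∑' z, g' z t) t := fun t ht =>
    hasDerivAt_tsum_of_isPreconnected hu isOpen_Ioo (convex_Ioo _ _).isPreconnected
      hg hg' h0mem hg0 ht
  have hsum1 : ∀ t ∈ Set.Ioo (-b) b, Summable (fun z => g z t) := by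
    intro t ht
    apply Summable.of_norm_bounded (summable_binA hα hb0.le hb1)
    intro z
    rw [hg_def, Real.norm_eq_abs, abs_mul, abs_pow, abs_of_nonneg (binA_nonneg hα z)]
    exact mul_le_mul_of_nonneg_left (pow_le_pow_left₀ (abs_nonneg t) (habs t ht) z)
      (binA_nonneg hα z)
  have hsumd : ∀ t ∈ Set.Ioo (-b) b, Summable (fun z => g' z t) := fun t ht =>
    Summable.of_norm_bounded hu (fun z => hg' z t ht)
  have hODE : ∀ t ∈ Set.Ioo (-b) b, (1 - t) * (∑' z, g' z t) = α * f t := by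
    intro t ht
    have hshift : ∑' z, g' z t = ∑' z, g' (z + 1) t := by
      rw [Summable.tsum_eq_zero_add (hsumd t ht)]
      simp [hg'_def]
    have hterm : ∀ z : ℕ, g' (z + 1) t = α * g z t + t * g' z t := by
      intro z
      have h1 : g' (z + 1) t = ((z : ℝ) + 1) * binA α (z + 1) * t ^ z := by
        rw [hg'_def]; push_cast; ring_nf
      rw [h1, binA_rec]
      push_cast
      cases z with
      | zero => simp [hg_def, hg'_def, binA]
      | succ m =>
        simp only [hg_def, hg'_def]
        have h2 : (m + 1 : ℕ) - 1 = m := rfl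
        rw [h2]
        push_cast
        ring
    have hadd : Summable (fun z => α * g z t) := (hsum1 t ht).mul_left α
    have hadd2 : Summable (fun z => t * g' z t) := (hsumd t ht).mul_left t
    have hS : ∑' z, g' z t = α * f t + t * ∑' z, g' z t := by
      calc ∑' z, g' z t = ∑' z, g' (z + 1) t := hshift
        _ = ∑' z, (α * g z t + t * g' z t) := tsum_congr hterm
        _ = α * f t + t * ∑' z, g' z t := by
            rw [Summable.tsum_add hadd hadd2, tsum_mul_left, tsum_mul_left]
    nlinarith [hS]
  -- the function F t = f t * (1-t)^α has zero derivative on the interval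
  set F : ℝ → ℝ := fun t => f t * (1 - t) ^ α with hF_def
  have hF : ∀ t ∈ Set.Ioo (-b) b, HasDerivAt F 0 t := by
    intro t ht
    have ht1 : (0:ℝ) < 1 - t := by have := ht.2; linarith
    have h1 : HasDerivAt (fun s : ℝ => (1 - s) ^ α) (α * (1 - t) ^ (α - 1) * (-1)) t := by
      have h2 := Real.hasDerivAt_rpow_const (x := 1 - t) (p := α) (Or.inl ht1.ne')
      exact h2.comp t ((hasDerivAt_id t).const_sub 1)
    have h3 := (hderiv t ht).mul h1
    convert h3 using 1
    iterate 3 rfl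
    have h4 : (1 - t) ^ α = (1 - t) ^ (α - 1) * (1 - t) := by
      rw [← Real.rpow_add_one ht1.ne' (α - 1), sub_add_cancel]
    rw [h4]
    linear_combination (-((1 - t) ^ (α - 1))) * hODE t ht
  -- F is constant on [0, y]
  have hsub : Set.Icc (0:ℝ) y ⊆ Set.Ioo (-b) b := fun t ht =>
    ⟨by have := ht.1; linarith, by have := ht.2; linarith⟩
  have hconst : F y = F 0 := by
    have := constant_of_has_deriv_right_zero (f := F) (a := 0) (b := y)
      (fun t ht => (hF t (hsub ht)).continuousAt.continuousWithinAt)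
      (fun t ht => (hF t (hsub ⟨ht.1, ht.2.le⟩)).hasDerivWithinAt)
    exact this y (Set.right_mem_Icc.mpr hy0)
  have hf0 : f 0 = 1 := by
    show ∑' z, g z 0 = 1
    rw [tsum_eq_single 0 (fun z hz => by simp [hg_def, zero_pow hz])]
    simp [hg_def, binA]
  have h1y : (0:ℝ) < 1 - y := by linarith
  have hfy : f y = (1 - y) ^ (-α) := by
    have h1 : f y * (1 - y) ^ α = 1 := by
      have h0 := hconst
      simp only [hF_def] at h0
      rwa [hf0, sub_zero, Real.one_rpow, one_mul] at h0
    have h2 : (0:ℝ) < (1 - y) ^ α := Real.rpow_pos_of_pos h1y α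
    rw [Real.rpow_neg h1y.le]
    field_simp
    linarith [h1]
  have hysum : Summable (fun z => g z y) := hsum1 y (hsub (Set.right_mem_Icc.mpr hy0))
  have h2 := hysum.hasSum
  have h3 : ∑' z, g z y = (1 - y) ^ (-α) := hfy
  rw [h3] at h2
  exact h2

lemma choose_prod (d : ℕ) : ∀ z : ℕ,
    (((d + z).choose z : ℕ) : ℝ) = ∏ i ∈ Finset.range z, ((d : ℝ) + i + 1) / (i + 1) := by
  intro z
  induction z with
  | zero => simp
  | succ m ih =>
    rw [Finset.prod_range_succ, ← ih]
    have hnat : (d + m + 1) * (d + m).choose m = (d + (m+1)).choose (m+1) * (m + 1) := by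
      have := Nat.add_one_mul_choose_eq (d + m) m
      simpa [Nat.succ_eq_add_one, Nat.add_assoc] using this
    have hR : ((d:ℝ) + m + 1) * ((d + m).choose m : ℝ) = ((d + (m+1)).choose (m+1) : ℝ) * (m + 1) := by
      exact_mod_cast hnat
    have hm1 : ((m:ℝ) + 1) ≠ 0 := by positivity
    field_simp
    linarith [hR]

/-- The Degroot estimator
D(z) = 1 - ∏_{j=1}^z (j + c - 1 - 1/k)/(j + c - 1)
is an unbiased estimator of p under model (c), inverse binomial sampling until
the c-th negative pool. -/
theorem stmt_4 (c k : ℕ) (hc : 1 ≤ c) (hk : 1 ≤ k) (p : ℝ)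
    (hp : p ∈ Set.Ioo (0 : ℝ) 1) :
    HasSum (fun z : ℕ =>
      (1 - ∏ j ∈ Finset.Icc 1 z, ((j : ℝ) + c - 1 - 1 / k) / ((j : ℝ) + c - 1)) *
        ((c + z - 1).choose z : ℝ) * ((1 - p) ^ k) ^ c * (1 - (1 - p) ^ k) ^ z)
      p := by
  obtain ⟨hp0, hp1⟩ := hp
  obtain ⟨d, rfl⟩ : ∃ d, c = d + 1 := ⟨c - 1, by omega⟩
  set q : ℝ := 1 - p with hq
  have hq0 : 0 < q := by rw [hq]; linarith
  have hq1 : q < 1 := by rw [hq]; linarith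
  set x : ℝ := q ^ k with hx
  have hx0 : 0 < x := by positivity
  have hx1 : x < 1 := pow_lt_one₀ hq0.le hq1 (by omega)
  set y : ℝ := 1 - x with hy
  have hy0 : 0 ≤ y := by rw [hy]; linarith
  have hy1 : y < 1 := by rw [hy]; linarith
  have h1y : (1 : ℝ) - y = x := by rw [hy]; ring
  have hk0 : (0:ℝ) < k := by exact_mod_cast hk
  have hkinv : 1 / (k:ℝ) ≤ 1 := by
    rw [div_le_one hk0]; exact_mod_cast hk
  -- α₁ = d + 1 (the pmf series), α₂ = d + 1 - 1/k
  set α₂ : ℝ := (d:ℝ) + 1 - 1 / k with hα₂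
  have hα₂0 : 0 ≤ α₂ := by rw [hα₂]; have : (0:ℝ) ≤ (d:ℝ) := Nat.cast_nonneg d; linarith
  -- series values
  have H1 : HasSum (fun z : ℕ => binA ((d:ℝ)+1) z * y ^ z) ((1 - y) ^ (-((d:ℝ)+1))) :=
    binom_series (by positivity) hy0 hy1
  have H2 : HasSum (fun z : ℕ => binA α₂ z * y ^ z) ((1 - y) ^ (-α₂)) :=
    binom_series hα₂0 hy0 hy1
  -- identify binA (d+1) with the binomial coefficient
  have hbinA1 : ∀ z : ℕ, binA ((d:ℝ)+1) z = (((d + z).choose z : ℕ) : ℝ) := by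
    intro z
    rw [choose_prod, binA]
    exact Finset.prod_congr rfl fun i _ => by ring_nf
  -- identify the Degroot product times choose with binA α₂
  have hprod : ∀ z : ℕ,
      (∏ j ∈ Finset.Icc 1 z, ((j : ℝ) + (d+1:ℕ) - 1 - 1 / k) / ((j : ℝ) + (d+1:ℕ) - 1)) *
        (((d + z).choose z : ℕ) : ℝ) = binA α₂ z := by
    intro z
    have hIcc : (∏ j ∈ Finset.Icc 1 z, ((j : ℝ) + (d+1:ℕ) - 1 - 1 / k) / ((j : ℝ) + (d+1:ℕ) - 1))
        = ∏ i ∈ Finset.range z, (α₂ + i) / ((i : ℝ) + d + 1) := by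
      have h1 : Finset.Icc 1 z = Finset.Ico 1 (z + 1) := rfl
      rw [h1, Finset.prod_Ico_eq_prod_range]
      simp only [Nat.add_sub_cancel]
      apply Finset.prod_congr rfl
      intro i _
      push_cast
      rw [hα₂]
      ring
    rw [hIcc, choose_prod, binA, ← Finset.prod_mul_distrib]
    apply Finset.prod_congr rfl
    intro i _
    have hne : ((i:ℝ) + d + 1) ≠ 0 := by positivity
    have hne2 : ((i:ℝ) + 1) ≠ 0 := by positivity
    field_simp
    ring
  -- pmf series sums to x^{-(d+1)}; multiplied by x^(d+1) gives 1
  have hx1pow : (1 - y) ^ (-((d:ℝ)+1)) * x ^ (d+1) = 1 := by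
    rw [h1y]
    have : ((d:ℝ)+1) = ((d+1 : ℕ) : ℝ) := by push_cast; ring
    rw [this, Real.rpow_neg hx0.le, Real.rpow_natCast]
    field_simp
  have hx2pow : (1 - y) ^ (-α₂) * x ^ (d+1) = q := by
    rw [h1y]
    have h1 : x ^ (d+1) = x ^ (((d+1:ℕ):ℝ)) := (Real.rpow_natCast x (d+1)).symm
    rw [h1, ← Real.rpow_add hx0]
    have h2 : -α₂ + ((d+1:ℕ):ℝ) = 1 / k := by rw [hα₂]; push_cast; ring
    rw [h2, hx, ← Real.rpow_natCast q k, ← Real.rpow_mul hq0.le]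
    have h3 : (k:ℝ) * (1/k) = 1 := by field_simp
    rw [h3, Real.rpow_one]
  -- assemble
  have G1 : HasSum (fun z : ℕ => (((d + z).choose z : ℕ) : ℝ) * x ^ (d+1) * y ^ z) 1 := by
    have := (H1.mul_right (x ^ (d+1)))
    rw [hx1pow] at this
    convert this using 2 with z
    · rfl
    rw [hbinA1]
    ring
  have G2 : HasSum (fun z : ℕ =>
      (∏ j ∈ Finset.Icc 1 z, ((j : ℝ) + (d+1:ℕ) - 1 - 1 / k) / ((j : ℝ) + (d+1:ℕ) - 1)) *
        (((d + z).choose z : ℕ) : ℝ) * x ^ (d+1) * y ^ z) q := by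
    have := (H2.mul_right (x ^ (d+1)))
    rw [hx2pow] at this
    convert this using 2 with z
    · rfl
    rw [hprod]
    ring
  have G := G1.sub G2
  have hval : (1 : ℝ) - q = p := by rw [hq]; ring
  rw [hval] at G
  convert G using 2 with z
  · rfl
  have hch : (d + 1 + z - 1).choose z = (d + z).choose z := by
    congr 1
    omega
  rw [hch, hy, hx]
  ring
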